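/- arXiv:0910.3189 — 3 statements merged into one kernel-verified Lean document; each statement's English description precedes it below -/
import Mathlib

section
/- Let L be the language with a binary function symbol +, a binary relation symbol <, a constant symbol 0, a unary function symbol f, and unary function symbols λ_q for each q ∈ ℚ. Let 𝔐 be the L-structure with universe ℚ × ℚ, where < is the lexicographic order, + is componentwise addition, 0 is (0,0), f((a,b)) = (−a,b), and λ_q((a,b)) = (qa,qb). Then Th(𝔐) admits quantifier elimination: for every L-formula φ(x̄) there is a quantifier-free L-formula ψ(x̄) such that 𝔐 ⊨ ∀x̄ (φ(x̄) ↔ ψ(x̄)). -/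
open FirstOrder Language Set

namespace DpMin

/-- The language with a binary function `+`, a binary relation `<`, a constant `0`, a unary
function `f`, and unary functions `λ_q` for each `q ∈ ℚ`. -/
def LQQ : FirstOrder.Language where
  Functions := fun n =>
    match n with
    | 0 => Unit
    | 1 => Unit ⊕ ℚ
    | 2 => Unit
    | _ => Empty
  Relations := fun n =>
    match n with
    | 2 => Unit
    | _ => Empty

/-- The structure `𝔐 = ⟨ℚ × ℚ, <_lex, +, (0,0), f, λ_q⟩_{q ∈ ℚ}` where `<` is the lexicographic
order, `+` is componentwise addition, `f((a,b)) = (−a,b)` and `λ_q((a,b)) = (qa,qb)`. -/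
instance instLQQStructure : LQQ.Structure (ℚ × ℚ) where
  funMap {n} :=
    match n with
    | 0 => fun _ _ => ((0 : ℚ), (0 : ℚ))
    | 1 => fun F x =>
        match F with
        | Sum.inl _ => (-(x 0).1, (x 0).2)
        | Sum.inr q => (q * (x 0).1, q * (x 0).2)
    | 2 => fun _ x => ((x 0).1 + (x 1).1, (x 0).2 + (x 1).2)
    | (_ + 3) => fun F _ => F.elim
  RelMap {n} :=
    match n with
    | 0 => fun R _ => R.elim
    | 1 => fun R _ => R.elim
    | 2 => fun _ x => (x 0).1 < (x 1).1 ∨ ((x 0).1 = (x 1).1 ∧ (x 0).2 < (x 1).2)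
    | (_ + 3) => fun R _ => R.elim

end DpMin

namespace DpMin


variable {m : ℕ}

/-- dot product -/
def dot (c u : Fin m → ℚ) : ℚ := ∑ i, c i * u i

@[simp] lemma dot_zero (u : Fin m → ℚ) : dot (fun _ => 0) u = 0 := by simp [dot]

lemma dot_sub (c c' u : Fin m → ℚ) : dot (c - c') u = dot c u - dot c' u := by
  simp [dot, sub_mul, Finset.sum_sub_distrib]

lemma dot_neg (c u : Fin m → ℚ) : dot (-c) u = -dot c u := by
  simp [dot, Finset.sum_neg_distrib]

lemma dot_smul (q : ℚ) (c u : Fin m → ℚ) : dot (q • c) u = q * dot c u := by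
  simp [dot, Finset.mul_sum, mul_assoc]

lemma dot_add (c c' u : Fin m → ℚ) : dot (c + c') u = dot c u + dot c' u := by
  simp [dot, add_mul, Finset.sum_add_distrib]

lemma dot_single (j : Fin m) (u : Fin m → ℚ) :
    dot (fun i => if i = j then 1 else 0) u = u j := by
  simp [dot]

lemma dot_snoc (c : Fin (m + 1) → ℚ) (u : Fin m → ℚ) (x : ℚ) :
    dot c (Fin.snoc u x) = dot (fun i => c i.castSucc) u + c (Fin.last m) * x := by
  simp [dot, Fin.sum_univ_castSucc]

/-- key density lemma -/
lemma exists_between_lists (ls us : List ℚ) :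
    (∃ x : ℚ, (∀ l ∈ ls, l < x) ∧ ∀ u ∈ us, x < u) ↔ ∀ l ∈ ls, ∀ u ∈ us, l < u := by
  constructor
  · rintro ⟨x, hl, hu⟩ l hls u hus
    exact (hl l hls).trans (hu u hus)
  · intro h
    have hmaxmem : ∀ (a : ℚ) (xs : List ℚ), ∀ l ∈ xs, l ≤ xs.foldr max a := by
      intro a xs
      induction xs with
      | nil => simp
      | cons y ys ih =>
        intro l hl
        rcases List.mem_cons.1 hl with rfl | hl
        · simp [le_max_iff]
        · exact le_max_of_le_right (ih l hl)
    have hmaxseed : ∀ (a : ℚ) (xs : List ℚ), a ≤ xs.foldr max a := by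
      intro a xs
      induction xs with
      | nil => simp
      | cons y ys ih => exact le_max_of_le_right ih
    have hmaxlt : ∀ (a b : ℚ) (xs : List ℚ), (∀ l ∈ xs, l < b) → a < b → xs.foldr max a < b := by
      intro a b xs hxs hab
      induction xs with
      | nil => simpa
      | cons y ys ih =>
        simp only [List.foldr, max_lt_iff]
        exact ⟨hxs y (by simp), ih (fun l hl => hxs l (by simp [hl]))⟩
    have hminmem : ∀ (a : ℚ) (xs : List ℚ), ∀ u ∈ xs, xs.foldr min a ≤ u := by
      intro a xs
      induction xs with
      | nil => simp
      | cons y ys ih =>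
        intro u hu
        rcases List.mem_cons.1 hu with rfl | hu
        · simp [min_le_iff]
        · exact min_le_of_right_le (ih u hu)
    have hminlt : ∀ (a b : ℚ) (xs : List ℚ), (∀ u ∈ xs, b < u) → b < a → b < xs.foldr min a := by
      intro a b xs hxs hab
      induction xs with
      | nil => simpa
      | cons y ys ih =>
        simp only [List.foldr, lt_min_iff]
        exact ⟨hxs y (by simp), ih (fun u hu => hxs u (by simp [hu]))⟩
    set Mx := ls.foldr max 0 with hMx
    set hi := us.foldr min (Mx + 1) with hhi
    set lo := ls.foldr max (hi - 1) with hlo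
    have hlohi : lo < hi := by
      apply hmaxlt
      · intro l hl
        apply hminlt
        · intro u hu; exact h l hl u hu
        · exact lt_of_le_of_lt (hmaxmem 0 ls l hl) (by linarith)
      · linarith
    refine ⟨(lo + hi) / 2, fun l hl => ?_, fun u hu => ?_⟩
    · have : l ≤ lo := hmaxmem _ ls l hl
      linarith
    · have : hi ≤ u := hminmem _ us u hu
      linarith


/-- An atom: `dot c u = 0` (if flag) or `dot c u < 0`. -/
abbrev QAtom (m : ℕ) : Type := (Fin m → ℚ) × Bool

def QAtom.eval (a : QAtom m) (u : Fin m → ℚ) : Prop :=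
  if a.2 then dot a.1 u = 0 else dot a.1 u < 0

/-- An extended atom with an extra variable. -/
abbrev EAtom (m : ℕ) : Type := (Fin m → ℚ) × ℚ × Bool

def EAtom.eval (a : EAtom m) (u : Fin m → ℚ) (x : ℚ) : Prop :=
  if a.2.2 then dot a.1 u + a.2.1 * x = 0 else dot a.1 u + a.2.1 * x < 0

/-- Fourier–Motzkin: elimination of one ℚ-variable from a conjunction of atoms. -/
theorem fm_ex (l : List (EAtom m)) :
    ∃ l' : List (QAtom m), ∀ u : Fin m → ℚ,
      (∃ x : ℚ, ∀ a ∈ l, a.eval u x) ↔ ∀ a ∈ l', a.eval u := by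
  by_cases h : ∃ a ∈ l, a.2.2 = true ∧ a.2.1 ≠ 0
  · -- substitution case
    obtain ⟨a0, ha0, hfl, he⟩ := h
    refine ⟨l.map (fun a => (a.1 - (a.2.1 / a0.2.1) • a0.1, a.2.2)), fun u => ?_⟩
    have key : ∀ (x : ℚ), dot a0.1 u + a0.2.1 * x = 0 →
        ∀ a : EAtom m, dot (a.1 - (a.2.1 / a0.2.1) • a0.1) u = dot a.1 u + a.2.1 * x := by
      intro x h0 a
      rw [dot_sub, dot_smul]
      have : dot a0.1 u = -(a0.2.1 * x) := by linarith
      rw [this]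
      field_simp
      ring
    constructor
    · rintro ⟨x, hx⟩ b hb
      rw [List.mem_map] at hb
      obtain ⟨a, ha, rfl⟩ := hb
      have h0 : dot a0.1 u + a0.2.1 * x = 0 := by
        have := hx a0 ha0
        rwa [EAtom.eval, hfl, if_pos rfl] at this
      have hk := key x h0 a
      have := hx a ha
      unfold EAtom.eval at this
      unfold QAtom.eval
      dsimp only
      rw [hk]
      exact this
    · intro h'
      refine ⟨-(dot a0.1 u) / a0.2.1, fun a ha => ?_⟩
      have h0 : dot a0.1 u + a0.2.1 * (-(dot a0.1 u) / a0.2.1) = 0 := by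
        field_simp
        ring
      have hk := key _ h0 a
      have := h' (a.1 - (a.2.1 / a0.2.1) • a0.1, a.2.2) (List.mem_map.2 ⟨a, ha, rfl⟩)
      unfold QAtom.eval at this
      dsimp only at this
      rw [hk] at this
      exact this
  · -- pure inequality case
    push_neg at h
    -- all atoms with nonzero x-coefficient are strict
    set l0 : List (EAtom m) := l.filter (fun a => a.2.1 = 0) with hl0
    set lP : List (EAtom m) := l.filter (fun a => 0 < a.2.1) with hlP
    set lN : List (EAtom m) := l.filter (fun a => a.2.1 < 0) with hlN
    refine ⟨l0.map (fun a => (a.1, a.2.2)) ++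
      lN.flatMap (fun a => lP.map (fun b => (b.2.1 • a.1 - a.2.1 • b.1, false))), fun u => ?_⟩
    have pair_iff : ∀ a b : EAtom m, a.2.1 < 0 → 0 < b.2.1 →
        (-(dot a.1 u) / a.2.1 < -(dot b.1 u) / b.2.1 ↔
          dot (b.2.1 • a.1 - a.2.1 • b.1) u < 0) := by
      intro a b ha hb
      rw [dot_sub, dot_smul, dot_smul]
      have h1 : -dot a.1 u / a.2.1 = dot a.1 u / (-a.2.1) := by
        rw [neg_div, div_neg]
      rw [h1, div_lt_div_iff₀ (by linarith) hb]
      constructor <;> intro h2 <;> nlinarith [h2]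
    have flagN : ∀ a ∈ lN, a.2.2 = false := by
      intro a ha
      rw [hlN, List.mem_filter] at ha
      have := h a ha.1
      rcases Bool.eq_false_or_eq_true a.2.2 with h' | h'
      · exfalso; have := this h'; have h2 := of_decide_eq_true ha.2; linarith
      · exact h'
    have flagP : ∀ a ∈ lP, a.2.2 = false := by
      intro a ha
      rw [hlP, List.mem_filter] at ha
      have := h a ha.1
      rcases Bool.eq_false_or_eq_true a.2.2 with h' | h'
      · exfalso; have := this h'; have h2 := of_decide_eq_true ha.2; linarith
      · exact h' 
    constructor
    · rintro ⟨x, hx⟩ b hb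
      rw [List.mem_append] at hb
      rcases hb with hb | hb
      · rw [List.mem_map] at hb
        obtain ⟨a, ha, rfl⟩ := hb
        rw [hl0, List.mem_filter] at ha
        have hz : a.2.1 = 0 := of_decide_eq_true ha.2
        have := hx a ha.1
        unfold EAtom.eval at this
        rw [hz] at this
        unfold QAtom.eval
        simpa using this
      · rw [List.mem_flatMap] at hb
        obtain ⟨a, ha, hb⟩ := hb
        rw [List.mem_map] at hb
        obtain ⟨b', hb', rfl⟩ := hb
        have ha2 := ha
        have hb2 := hb'
        rw [hlN, List.mem_filter] at ha2
        rw [hlP, List.mem_filter] at hb2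
        have haN : a.2.1 < 0 := of_decide_eq_true ha2.2
        have hbP : 0 < b'.2.1 := of_decide_eq_true hb2.2
        unfold QAtom.eval
        dsimp only
        rw [if_neg Bool.false_ne_true, ← pair_iff a b' haN hbP]
        have hxa := hx a ha2.1
        have hxb := hx b' hb2.1
        unfold EAtom.eval at hxa hxb
        rw [flagN a ha] at hxa
        rw [flagP b' hb'] at hxb
        rw [if_neg Bool.false_ne_true] at hxa hxb
        have hL : -dot a.1 u / a.2.1 < x := by
          rw [div_lt_iff_of_neg haN]
          nlinarith [hxa]
        have hU : x < -dot b'.1 u / b'.2.1 := by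
          rw [lt_div_iff₀ hbP]
          nlinarith [hxb]
        linarith
    · intro h'
      have hbetween : ∃ x : ℚ, (∀ L ∈ lN.map (fun a => -dot a.1 u / a.2.1), L < x) ∧
          ∀ U ∈ lP.map (fun a => -dot a.1 u / a.2.1), x < U := by
        rw [exists_between_lists]
        intro L hL U hU
        rw [List.mem_map] at hL hU
        obtain ⟨a, ha, rfl⟩ := hL
        obtain ⟨b, hb, rfl⟩ := hU
        have ha2 := ha
        have hb2 := hb
        rw [hlN, List.mem_filter] at ha2
        rw [hlP, List.mem_filter] at hb2
        have haN : a.2.1 < 0 := of_decide_eq_true ha2.2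
        have hbP : 0 < b.2.1 := of_decide_eq_true hb2.2
        rw [pair_iff a b haN hbP]
        have := h' (b.2.1 • a.1 - a.2.1 • b.1, false)
          (List.mem_append.2 (Or.inr (List.mem_flatMap.2 ⟨a, ha, List.mem_map.2 ⟨b, hb, rfl⟩⟩)))
        unfold QAtom.eval at this
        simpa using this
      obtain ⟨x, hLx, hxU⟩ := hbetween
      refine ⟨x, fun a ha => ?_⟩
      rcases lt_trichotomy a.2.1 0 with hneg | hzero | hpos
      · have haN : a ∈ lN := by rw [hlN, List.mem_filter]; exact ⟨ha, decide_eq_true hneg⟩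
        have := hLx (-dot a.1 u / a.2.1) (List.mem_map.2 ⟨a, haN, rfl⟩)
        unfold EAtom.eval
        rw [flagN a haN]
        rw [if_neg Bool.false_ne_true]
        rw [div_lt_iff_of_neg hneg] at this
        nlinarith [this]
      · have ha0 : a ∈ l0 := by rw [hl0, List.mem_filter]; exact ⟨ha, decide_eq_true hzero⟩
        have := h' (a.1, a.2.2) (List.mem_append.2 (Or.inl (List.mem_map.2 ⟨a, ha0, rfl⟩)))
        unfold QAtom.eval at this
        unfold EAtom.eval
        rw [hzero]
        simpa using this
      · have haP : a ∈ lP := by rw [hlP, List.mem_filter]; exact ⟨ha, decide_eq_true hpos⟩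
        have := hxU (-dot a.1 u / a.2.1) (List.mem_map.2 ⟨a, haP, rfl⟩)
        unfold EAtom.eval
        rw [flagP a haP]
        rw [if_neg Bool.false_ne_true]
        rw [lt_div_iff₀ hpos] at this
        nlinarith [this]

-- === M-level ===
abbrev M := ℚ × ℚ

/-- Atom over `(ℚ×ℚ)^m`: a coordinate tag (`true` = first) and a `QAtom`. -/
abbrev MAtom (m : ℕ) : Type := Bool × QAtom m

def proj (b : Bool) (v : Fin m → M) : Fin m → ℚ := fun i => if b then (v i).1 else (v i).2

def MAtom.eval (a : MAtom m) (v : Fin m → M) : Prop := a.2.eval (proj a.1 v)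

def evalC (c : List (MAtom m)) (v : Fin m → M) : Prop := ∀ a ∈ c, a.eval v

def evalD (d : List (List (MAtom m))) (v : Fin m → M) : Prop := ∃ c ∈ d, evalC c v

@[simp] lemma evalA_true (co : Bool) (c : Fin m → ℚ) (v : Fin m → M) :
    MAtom.eval (co, (c, true)) v ↔ dot c (proj co v) = 0 := by
  simp [MAtom.eval, QAtom.eval]

@[simp] lemma evalA_false (co : Bool) (c : Fin m → ℚ) (v : Fin m → M) :
    MAtom.eval (co, (c, false)) v ↔ dot c (proj co v) < 0 := by
  simp [MAtom.eval, QAtom.eval]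

@[simp] lemma evalC_nil (v : Fin m → M) : evalC [] v ↔ True := by simp [evalC]

@[simp] lemma evalC_cons (a : MAtom m) (t : List (MAtom m)) (v : Fin m → M) :
    evalC (a :: t) v ↔ a.eval v ∧ evalC t v := by
  simp [evalC, List.forall_mem_cons]

@[simp] lemma evalD_nil (v : Fin m → M) : evalD [] v ↔ False := by simp [evalD]

@[simp] lemma evalD_cons (c : List (MAtom m)) (t : List (List (MAtom m))) (v : Fin m → M) :
    evalD (c :: t) v ↔ evalC c v ∨ evalD t v := by
  simp only [evalD, List.mem_cons]
  constructor
  · rintro ⟨cc, (rfl | h), hcc⟩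
    · exact Or.inl hcc
    · exact Or.inr ⟨cc, h, hcc⟩
  · rintro (h | ⟨cc, h, hcc⟩)
    · exact ⟨c, Or.inl rfl, h⟩
    · exact ⟨cc, Or.inr h, hcc⟩

theorem andD_ex (d1 d2 : List (List (MAtom m))) :
    ∃ d, ∀ v : Fin m → M, evalD d v ↔ evalD d1 v ∧ evalD d2 v := by
  refine ⟨d1.flatMap (fun c1 => d2.map (fun c2 => c1 ++ c2)), fun v => ?_⟩
  constructor
  · rintro ⟨c, hc, hev⟩
    rw [List.mem_flatMap] at hc
    obtain ⟨c1, hc1, hc⟩ := hc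
    rw [List.mem_map] at hc
    obtain ⟨c2, hc2, rfl⟩ := hc
    exact ⟨⟨c1, hc1, fun a ha => hev a (List.mem_append.2 (Or.inl ha))⟩,
      ⟨c2, hc2, fun a ha => hev a (List.mem_append.2 (Or.inr ha))⟩⟩
  · rintro ⟨⟨c1, hc1, h1⟩, ⟨c2, hc2, h2⟩⟩
    refine ⟨c1 ++ c2, List.mem_flatMap.2 ⟨c1, hc1, List.mem_map.2 ⟨c2, hc2, rfl⟩⟩, ?_⟩
    intro a ha
    rcases List.mem_append.1 ha with h | h
    · exact h1 a h
    · exact h2 a h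

theorem negA_ex (a : MAtom m) :
    ∃ d, ∀ v : Fin m → M, evalD d v ↔ ¬ a.eval v := by
  obtain ⟨co, c, fl⟩ := a
  cases fl
  · refine ⟨[ [(co, (c, true))], [(co, (-c, false))] ], fun v => ?_⟩
    have hd := dot_neg c (proj co v)
    simp only [evalD_cons, evalD_nil, evalC_cons, evalC_nil, evalA_true, evalA_false,
      and_true, or_false]
    rw [hd]
    constructor
    · rintro (h | h) <;> intro hlt <;> linarith
    · intro hne
      rcases lt_trichotomy (dot c (proj co v)) 0 with h | h | h
      · exact absurd h hne
      · exact Or.inl h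
      · exact Or.inr (by linarith)
  · refine ⟨[ [(co, (c, false))], [(co, (-c, false))] ], fun v => ?_⟩
    have hd := dot_neg c (proj co v)
    simp only [evalD_cons, evalD_nil, evalC_cons, evalC_nil, evalA_true, evalA_false,
      and_true, or_false]
    rw [hd]
    constructor
    · rintro (h | h) <;> intro heq <;> linarith
    · intro hne
      rcases lt_trichotomy (dot c (proj co v)) 0 with h | h | h
      · exact Or.inl h
      · exact absurd h hne
      · exact Or.inr (by linarith)

theorem negC_ex (c : List (MAtom m)) :
    ∃ d, ∀ v : Fin m → M, evalD d v ↔ ¬ evalC c v := by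
  induction c with
  | nil => exact ⟨[], fun v => by simp [evalD, evalC]⟩
  | cons a t ih =>
    obtain ⟨da, hda⟩ := negA_ex a
    obtain ⟨dt, hdt⟩ := ih
    refine ⟨da ++ dt, fun v => ?_⟩
    have : ¬ evalC (a :: t) v ↔ ¬ a.eval v ∨ ¬ evalC t v := by
      simp only [evalC, List.mem_cons]
      constructor
      · intro hn
        by_contra hc
        push_neg at hc
        exact hn (by rintro b (rfl | hb); exacts [hc.1, hc.2 b hb])
      · rintro (h | h) hall
        · exact h (hall a (Or.inl rfl))
        · exact h (fun b hb => hall b (Or.inr hb))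
    rw [this, ← hda, ← hdt]
    simp only [evalD, List.mem_append]
    constructor
    · rintro ⟨cc, (h | h), hcc⟩
      · exact Or.inl ⟨cc, h, hcc⟩
      · exact Or.inr ⟨cc, h, hcc⟩
    · rintro (⟨cc, h, hcc⟩ | ⟨cc, h, hcc⟩)
      · exact ⟨cc, Or.inl h, hcc⟩
      · exact ⟨cc, Or.inr h, hcc⟩

theorem negD_ex (d : List (List (MAtom m))) :
    ∃ d', ∀ v : Fin m → M, evalD d' v ↔ ¬ evalD d v := by
  induction d with
  | nil => exact ⟨[ [] ], fun v => by simp [evalD, evalC]⟩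
  | cons c t ih =>
    obtain ⟨dc, hdc⟩ := negC_ex c
    obtain ⟨dt, hdt⟩ := ih
    obtain ⟨da, hda⟩ := andD_ex dc dt
    refine ⟨da, fun v => ?_⟩
    rw [hda v, hdc v, hdt v]
    simp only [evalD, List.mem_cons]
    constructor
    · rintro ⟨h1, h2⟩ ⟨cc, (rfl | h), hcc⟩
      · exact h1 hcc
      · exact h2 ⟨cc, h, hcc⟩
    · intro hn
      constructor
      · intro hc; exact hn ⟨c, Or.inl rfl, hc⟩
      · rintro ⟨cc, h, hcc⟩; exact hn ⟨cc, Or.inr h, hcc⟩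

lemma proj_snoc (b : Bool) (v : Fin m → M) (x : M) :
    proj b (Fin.snoc v x) = Fin.snoc (proj b v) (if b then x.1 else x.2) := by
  funext i
  refine Fin.lastCases ?_ ?_ i
  · simp [proj]
  · intro j; simp [proj]

def toE (a : QAtom (m + 1)) : EAtom m :=
  (fun i => a.1 i.castSucc, a.1 (Fin.last m), a.2)

lemma evalE_toE (a : QAtom (m + 1)) (u : Fin m → ℚ) (y : ℚ) :
    (toE a).eval u y ↔ a.eval (Fin.snoc u y) := by
  obtain ⟨c, fl⟩ := a
  simp only [toE, EAtom.eval, QAtom.eval, dot_snoc]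
  exact Iff.rfl

theorem exC_ex (c : List (MAtom (m + 1))) :
    ∃ c' : List (MAtom m), ∀ v : Fin m → M,
      evalC c' v ↔ ∃ x : M, evalC c (Fin.snoc v x) := by
  obtain ⟨l1, hl1⟩ := fm_ex ((c.filter (fun a => a.1)).map (fun a => toE a.2))
  obtain ⟨l2, hl2⟩ := fm_ex ((c.filter (fun a => !a.1)).map (fun a => toE a.2))
  refine ⟨l1.map (fun q => ((true : Bool), q)) ++ l2.map (fun q => ((false : Bool), q)),
    fun v => ?_⟩
  have split : ∀ x : M, evalC c (Fin.snoc v x) ↔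
      ((∀ a ∈ (c.filter (fun a => a.1)).map (fun a => toE a.2),
          EAtom.eval a (proj true v) x.1) ∧
       (∀ a ∈ (c.filter (fun a => !a.1)).map (fun a => toE a.2),
          EAtom.eval a (proj false v) x.2)) := by
    intro x
    constructor
    · intro hx
      constructor
      · intro e he
        rw [List.mem_map] at he
        obtain ⟨a, ha, rfl⟩ := he
        rw [List.mem_filter] at ha
        have hco : a.1 = true := by simpa using ha.2
        have := hx a ha.1
        rw [MAtom.eval, hco, proj_snoc] at this
        rw [evalE_toE]
        simpa using this
      · intro e he
        rw [List.mem_map] at he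
        obtain ⟨a, ha, rfl⟩ := he
        rw [List.mem_filter] at ha
        have hco : a.1 = false := by simpa using ha.2
        have := hx a ha.1
        rw [MAtom.eval, hco, proj_snoc] at this
        rw [evalE_toE]
        simpa using this
    · rintro ⟨h1, h2⟩ a ha
      rw [MAtom.eval]
      cases hco : a.1
      · have := h2 (toE a.2) (List.mem_map.2 ⟨a, List.mem_filter.2 ⟨ha, by simp [hco]⟩, rfl⟩)
        rw [evalE_toE] at this
        rw [proj_snoc]
        simpa using this
      · have := h1 (toE a.2) (List.mem_map.2 ⟨a, List.mem_filter.2 ⟨ha, by simp [hco]⟩, rfl⟩)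
        rw [evalE_toE] at this
        rw [proj_snoc]
        simpa using this
  constructor
  · intro h'
    have h1 : ∃ y : ℚ, ∀ a ∈ (c.filter (fun a => a.1)).map (fun a => toE a.2),
        EAtom.eval a (proj true v) y := by
      rw [hl1]
      intro q hq
      have := h' ((true : Bool), q) (List.mem_append.2 (Or.inl (List.mem_map.2 ⟨q, hq, rfl⟩)))
      simpa [MAtom.eval] using this
    have h2 : ∃ y : ℚ, ∀ a ∈ (c.filter (fun a => !a.1)).map (fun a => toE a.2),
        EAtom.eval a (proj false v) y := by
      rw [hl2]
      intro q hq
      have := h' ((false : Bool), q) (List.mem_append.2 (Or.inr (List.mem_map.2 ⟨q, hq, rfl⟩)))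
      simpa [MAtom.eval] using this
    obtain ⟨y1, hy1⟩ := h1
    obtain ⟨y2, hy2⟩ := h2
    exact ⟨(y1, y2), (split (y1, y2)).2 ⟨hy1, hy2⟩⟩
  · rintro ⟨x, hx⟩
    have := (split x).1 hx
    intro a ha
    rcases List.mem_append.1 ha with h | h
    · rw [List.mem_map] at h
      obtain ⟨q, hq, rfl⟩ := h
      have : ∀ a ∈ l1, QAtom.eval a (proj true v) := (hl1 (proj true v)).1 ⟨x.1, this.1⟩
      simpa [MAtom.eval] using this q hq
    · rw [List.mem_map] at h
      obtain ⟨q, hq, rfl⟩ := h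
      have : ∀ a ∈ l2, QAtom.eval a (proj false v) := (hl2 (proj false v)).1 ⟨x.2, this.2⟩
      simpa [MAtom.eval] using this q hq

theorem exD_ex (d : List (List (MAtom (m + 1)))) :
    ∃ d', ∀ v : Fin m → M, evalD d' v ↔ ∃ x : M, evalD d (Fin.snoc v x) := by
  induction d with
  | nil => exact ⟨[], fun v => by simp [evalD]⟩
  | cons c t ih =>
    obtain ⟨c', hc'⟩ := exC_ex c
    obtain ⟨dt, hdt⟩ := ih
    refine ⟨c' :: dt, fun v => ?_⟩
    simp only [evalD, List.mem_cons]
    constructor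
    · rintro ⟨cc, (rfl | h), hcc⟩
      · obtain ⟨x, hx⟩ := (hc' v).1 hcc
        exact ⟨x, c, Or.inl rfl, hx⟩
      · obtain ⟨x, hx⟩ := (hdt v).1 ⟨cc, h, hcc⟩
        obtain ⟨cc2, h2, hcc2⟩ := hx
        exact ⟨x, cc2, Or.inr h2, hcc2⟩
    · rintro ⟨x, cc, (rfl | h), hcc⟩
      · exact ⟨c', Or.inl rfl, (hc' v).2 ⟨x, hcc⟩⟩
      · obtain ⟨cc2, h2, hcc2⟩ := (hdt v).2 ⟨x, cc, h, hcc⟩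
        exact ⟨cc2, Or.inr h2, hcc2⟩

theorem allD_ex (d : List (List (MAtom (m + 1)))) :
    ∃ d', ∀ v : Fin m → M, evalD d' v ↔ ∀ x : M, evalD d (Fin.snoc v x) := by
  obtain ⟨dn, hdn⟩ := negD_ex d
  obtain ⟨de, hde⟩ := exD_ex dn
  obtain ⟨dnn, hdnn⟩ := negD_ex de
  refine ⟨dnn, fun v => ?_⟩
  rw [hdnn, hde]
  push_neg
  constructor
  · intro h x
    have := h x
    rw [hdn] at this
    exact not_not.1 this
  · intro h x
    rw [hdn]
    exact not_not.2 (h x)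


@[simp] lemma funMap0 (f : LQQ.Functions 0) (x : Fin 0 → M) :
    Structure.funMap f x = ((0:ℚ), (0:ℚ)) := rfl
@[simp] lemma funMapF (u : Unit) (x : Fin 1 → M) :
    Structure.funMap (L := LQQ) (M := M) (n := 1) (Sum.inl u) x = (-(x 0).1, (x 0).2) := rfl
@[simp] lemma funMapSc (q : ℚ) (x : Fin 1 → M) :
    Structure.funMap (L := LQQ) (M := M) (n := 1) (Sum.inr q) x = (q * (x 0).1, q * (x 0).2) := rfl
@[simp] lemma funMapAdd (f : LQQ.Functions 2) (x : Fin 2 → M) :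
    Structure.funMap f x = ((x 0).1 + (x 1).1, (x 0).2 + (x 1).2) := rfl
@[simp] lemma relMapLt (R : LQQ.Relations 2) (x : Fin 2 → M) :
    Structure.RelMap R x ↔ ((x 0).1 < (x 1).1 ∨ ((x 0).1 = (x 1).1 ∧ (x 0).2 < (x 1).2)) := Iff.rfl

example (t u : LQQ.Term (Fin 3)) (env : Fin 3 → M) :
    (Term.func (l := 2) (() : LQQ.Functions 2) ![t, u]).realize env
      = ((t.realize env).1 + (u.realize env).1, (t.realize env).2 + (u.realize env).2) := by
  rfl


section Terms
variable {α : Type*}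

def tAdd (t u : LQQ.Term α) : LQQ.Term α := Term.func (l := 2) (() : LQQ.Functions 2) ![t, u]
def tF (t : LQQ.Term α) : LQQ.Term α := Term.func (l := 1) (Sum.inl () : LQQ.Functions 1) ![t]
def tSc (q : ℚ) (t : LQQ.Term α) : LQQ.Term α := Term.func (l := 1) (Sum.inr q : LQQ.Functions 1) ![t]
def tZero : LQQ.Term α := Term.func (l := 0) (() : LQQ.Functions 0) ![]

variable (env : α → M)

@[simp] lemma realize_tZero : (tZero (α := α)).realize env = ((0:ℚ), (0:ℚ)) := by
  rfl

@[simp] lemma realize_tAdd (t u : LQQ.Term α) :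
    (tAdd t u).realize env =
      ((t.realize env).1 + (u.realize env).1, (t.realize env).2 + (u.realize env).2) := by
  rfl

@[simp] lemma realize_tF (t : LQQ.Term α) :
    (tF t).realize env = (-(t.realize env).1, (t.realize env).2) := by
  rfl

@[simp] lemma realize_tSc (q : ℚ) (t : LQQ.Term α) :
    (tSc q t).realize env = (q * (t.realize env).1, q * (t.realize env).2) := by
  rfl

def tA (t : LQQ.Term α) : LQQ.Term α := tAdd t (tSc (-1) (tSc (1/2) (tAdd t (tF t))))
def tB (t : LQQ.Term α) : LQQ.Term α := tSc (1/2) (tAdd t (tF t))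

@[simp] lemma realize_tA (t : LQQ.Term α) :
    (tA t).realize env = ((t.realize env).1, 0) := by
  refine Prod.ext ?_ ?_ <;> simp [tA] <;> ring

@[simp] lemma realize_tB (t : LQQ.Term α) :
    (tB t).realize env = (0, (t.realize env).2) := by
  refine Prod.ext ?_ ?_ <;> simp [tB] <;> ring

def tMon (q r : ℚ) (t : LQQ.Term α) : LQQ.Term α := tAdd (tSc q (tA t)) (tSc r (tB t))

@[simp] lemma realize_tMon (q r : ℚ) (t : LQQ.Term α) :
    (tMon q r t).realize env = (q * (t.realize env).1, r * (t.realize env).2) := by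
  refine Prod.ext ?_ ?_ <;> simp [tMon]

end Terms

/-- term with realization `(dot c (first coords), dot d (second coords))` -/
def tm {k : ℕ} (c d : Fin k → ℚ) : LQQ.Term (Fin k ⊕ Fin 0) :=
  (List.finRange k).foldr (fun i acc => tAdd (tMon (c i) (d i) (Term.var (Sum.inl i))) acc) tZero

lemma realize_tm_aux {k : ℕ} (c d : Fin k → ℚ) (env : Fin k ⊕ Fin 0 → M) (lst : List (Fin k)) :
    ((lst.foldr (fun i acc => tAdd (tMon (c i) (d i) (Term.var (Sum.inl i))) acc)
      (tZero : LQQ.Term (Fin k ⊕ Fin 0))).realize env) =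
      ((lst.map (fun i => c i * (env (Sum.inl i)).1)).sum,
       (lst.map (fun i => d i * (env (Sum.inl i)).2)).sum) := by
  induction lst with
  | nil => simp
  | cons j t ih => simp [ih, Term.realize]

lemma realize_tm {k : ℕ} (c d : Fin k → ℚ) (v : Fin k → M) (xs : Fin 0 → M) :
    (tm c d).realize (Sum.elim v xs) = (dot c (proj true v), dot d (proj false v)) := by
  rw [tm, realize_tm_aux]
  simp only [Sum.elim_inl]
  rw [dot, dot, Fin.sum_univ_def, Fin.sum_univ_def]
  simp [proj]


-- === Terms realize linear pairs ===

theorem term_lin {k n : ℕ} (t : LQQ.Term (Fin k ⊕ Fin n)) :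
    ∃ c d : Fin (k + n) → ℚ, ∀ (v : Fin k → M) (xs : Fin n → M),
      t.realize (Sum.elim v xs) =
        (dot c (proj true (Fin.append v xs)), dot d (proj false (Fin.append v xs))) := by
  induction t with
  | var x =>
    cases x with
    | inl i =>
      refine ⟨fun j => if j = Fin.castAdd n i then 1 else 0,
        fun j => if j = Fin.castAdd n i then 1 else 0, fun v xs => ?_⟩
      simp [Term.realize, dot_single, proj, Fin.append_left]
    | inr i =>
      refine ⟨fun j => if j = Fin.natAdd k i then 1 else 0,
        fun j => if j = Fin.natAdd k i then 1 else 0, fun v xs => ?_⟩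
      simp [Term.realize, dot_single, proj, Fin.append_right]
  | @func l f ts ih =>
    match l, f with
    | 0, _ =>
      exact ⟨fun _ => 0, fun _ => 0, fun v xs => by simp [Term.realize]⟩
    | 1, Sum.inl _ =>
      obtain ⟨c, d, h⟩ := ih 0
      refine ⟨-c, d, fun v xs => ?_⟩
      simp [Term.realize, h, dot_neg]
    | 1, Sum.inr q =>
      obtain ⟨c, d, h⟩ := ih 0
      refine ⟨q • c, q • d, fun v xs => ?_⟩
      simp [Term.realize, h, dot_smul]
    | 2, _ =>
      obtain ⟨c1, d1, h1⟩ := ih 0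
      obtain ⟨c2, d2, h2⟩ := ih 1
      refine ⟨c1 + c2, d1 + d2, fun v xs => ?_⟩
      simp [Term.realize, h1, h2, dot_add]
    | (l + 3), f => exact f.elim

@[simp] lemma evalD_append {m : ℕ} (d1 d2 : List (List (MAtom m))) (v : Fin m → M) :
    evalD (d1 ++ d2) v ↔ evalD d1 v ∨ evalD d2 v := by
  simp only [evalD, List.mem_append]
  constructor
  · rintro ⟨c, (h | h), hc⟩
    · exact Or.inl ⟨c, h, hc⟩
    · exact Or.inr ⟨c, h, hc⟩
  · rintro (⟨c, h, hc⟩ | ⟨c, h, hc⟩)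
    · exact ⟨c, Or.inl h, hc⟩
    · exact ⟨c, Or.inr h, hc⟩

-- === Every formula is equivalent to a DNF of atoms ===

theorem formula_dnf {k : ℕ} : ∀ {n : ℕ} (φ : LQQ.BoundedFormula (Fin k) n),
    ∃ d : List (List (MAtom (k + n))), ∀ (v : Fin k → M) (xs : Fin n → M),
      φ.Realize v xs ↔ evalD d (Fin.append v xs) := by
  intro n φ
  induction φ with
  | falsum =>
    exact ⟨[], fun v xs => iff_of_false (fun h => h) (by simp)⟩
  | equal t1 t2 =>
    obtain ⟨c1, d1, h1⟩ := term_lin t1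
    obtain ⟨c2, d2, h2⟩ := term_lin t2
    refine ⟨[ [(true, (c1 - c2, true)), (false, (d1 - d2, true))] ], fun v xs => ?_⟩
    have hre : (BoundedFormula.equal t1 t2).Realize v xs ↔
        t1.realize (Sum.elim v xs) = t2.realize (Sum.elim v xs) := Iff.rfl
    rw [hre, h1, h2]
    simp [Prod.ext_iff, dot_sub, sub_eq_zero]
  | @rel n' l R ts =>
    match l, R with
    | 2, R =>
      obtain ⟨c1, d1, h1⟩ := term_lin (ts 0)
      obtain ⟨c2, d2, h2⟩ := term_lin (ts 1)
      refine ⟨[ [(true, (c1 - c2, false))], [(true, (c1 - c2, true)), (false, (d1 - d2, false))] ],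
        fun v xs => ?_⟩
      have hre : (BoundedFormula.rel R ts).Realize v xs ↔
          Structure.RelMap R (fun i => (ts i).realize (Sum.elim v xs)) := Iff.rfl
      rw [hre, relMapLt]
      simp [h1, h2, Prod.ext_iff, dot_sub, sub_eq_zero, sub_neg]
    | 0, R => exact R.elim
    | 1, R => exact R.elim
    | (l + 3), R => exact R.elim
  | imp φ1 φ2 ih1 ih2 =>
    obtain ⟨d1, hd1⟩ := ih1
    obtain ⟨d2, hd2⟩ := ih2
    obtain ⟨dn, hdn⟩ := negD_ex d1
    refine ⟨dn ++ d2, fun v xs => ?_⟩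
    rw [BoundedFormula.realize_imp, hd1, hd2, evalD_append, hdn, imp_iff_not_or]
  | all φ ih =>
    obtain ⟨d, hd⟩ := ih
    obtain ⟨d', hd'⟩ := allD_ex d
    refine ⟨d', fun v xs => ?_⟩
    rw [BoundedFormula.realize_all, hd']
    refine forall_congr' fun x => ?_
    rw [hd v (Fin.snoc xs x), Fin.append_snoc]

-- === From DNF back to a quantifier-free formula ===

def tsel {k : ℕ} (a : MAtom k) : LQQ.Term (Fin k ⊕ Fin 0) :=
  if a.1 then tm a.2.1 (fun _ => 0) else tm (fun _ => 0) a.2.1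

def atomF {k : ℕ} (a : MAtom k) : LQQ.Formula (Fin k) :=
  if a.2.2 then Term.bdEqual (tsel a) tZero
  else Relations.boundedFormula₂ (() : LQQ.Relations 2) (tsel a) tZero

lemma atomF_isQF {k : ℕ} (a : MAtom k) : (atomF a).IsQF := by
  rcases a with ⟨co, c, fl⟩
  cases fl
  · simp only [atomF, if_neg Bool.false_ne_true]
    exact (BoundedFormula.IsAtomic.rel _ _).isQF
  · simp only [atomF, if_pos rfl]
    exact (BoundedFormula.IsAtomic.equal _ _).isQF

lemma realize_atomF {k : ℕ} (a : MAtom k) (v : Fin k → M) :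
    (atomF a).Realize v ↔ a.eval v := by
  rcases a with ⟨co, c, fl⟩
  cases fl
  · cases co
    · have h1 : atomF ((false : Bool), (c, (false : Bool))) =
          Relations.boundedFormula₂ (() : LQQ.Relations 2) (tm (fun _ => 0) c) tZero := rfl
      rw [h1]
      unfold Formula.Realize
      refine (BoundedFormula.realize_rel₂ (R := (() : LQQ.Relations 2)) ..).trans ((relMapLt _ _).trans ?_)
      simp [realize_tm]
    · have h1 : atomF ((true : Bool), (c, (false : Bool))) =
          Relations.boundedFormula₂ (() : LQQ.Relations 2) (tm c (fun _ => 0)) tZero := rfl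
      rw [h1]
      unfold Formula.Realize
      refine (BoundedFormula.realize_rel₂ (R := (() : LQQ.Relations 2)) ..).trans ((relMapLt _ _).trans ?_)
      simp [realize_tm]
  · cases co
    · have h1 : atomF ((false : Bool), (c, (true : Bool))) =
          Term.bdEqual (tm (fun _ => 0) c) tZero := rfl
      rw [h1]
      unfold Formula.Realize
      rw [BoundedFormula.realize_bdEqual]
      simp [realize_tm, Prod.ext_iff]
    · have h1 : atomF ((true : Bool), (c, (true : Bool))) =
          Term.bdEqual (tm c (fun _ => 0)) tZero := rfl
      rw [h1]
      unfold Formula.Realize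
      rw [BoundedFormula.realize_bdEqual]
      simp [realize_tm, Prod.ext_iff]

def conjF {k : ℕ} (c : List (MAtom k)) : LQQ.Formula (Fin k) :=
  c.foldr (fun a acc => atomF a ⊓ acc) ⊤

lemma conjF_isQF {k : ℕ} (c : List (MAtom k)) : (conjF c).IsQF := by
  induction c with
  | nil => exact BoundedFormula.IsQF.top
  | cons a t ih => exact (atomF_isQF a).inf ih

lemma realize_conjF {k : ℕ} (c : List (MAtom k)) (v : Fin k → M) :
    (conjF c).Realize v ↔ evalC c v := by
  induction c with
  | nil => simp [conjF, Formula.realize_top]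
  | cons a t ih =>
    rw [show conjF (a :: t) = atomF a ⊓ conjF t from rfl, Formula.realize_inf,
      realize_atomF, ih, evalC_cons]

def disjF {k : ℕ} (d : List (List (MAtom k))) : LQQ.Formula (Fin k) :=
  d.foldr (fun c acc => conjF c ⊔ acc) ⊥

lemma disjF_isQF {k : ℕ} (d : List (List (MAtom k))) : (disjF d).IsQF := by
  induction d with
  | nil => exact BoundedFormula.isQF_bot
  | cons c t ih => exact (conjF_isQF c).sup ih

lemma realize_disjF {k : ℕ} (d : List (List (MAtom k))) (v : Fin k → M) :
    (disjF d).Realize v ↔ evalD d v := by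
  induction d with
  | nil => simp [disjF, Formula.realize_bot]
  | cons c t ih =>
    rw [show disjF (c :: t) = conjF c ⊔ disjF t from rfl, Formula.realize_sup,
      realize_conjF, ih, evalD_cons]

/-- The theory of `𝔐 = ⟨ℚ × ℚ, <_lex, +, (0,0), f, λ_q⟩_{q ∈ ℚ}` admits quantifier elimination:
every formula is equivalent in `𝔐` to a quantifier-free formula. -/
theorem LQQ_qe (k : ℕ) (φ : LQQ.Formula (Fin k)) :
    ∃ ψ : LQQ.Formula (Fin k), ψ.IsQF ∧
      ∀ v : Fin k → ℚ × ℚ, φ.Realize v ↔ ψ.Realize v := by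
  obtain ⟨d, hd⟩ := formula_dnf (k := k) (n := 0) φ
  refine ⟨disjF d, disjF_isQF d, fun v => ?_⟩
  rw [realize_disjF]
  have happ : Fin.append v (default : Fin 0 → M) = v := by
    funext i
    have hi : Fin.castAdd 0 i = i := Fin.ext rfl
    rw [← hi, Fin.append_left, hi]
  have h2 := hd v default
  rw [happ] at h2
  unfold Formula.Realize
  rwa [show (@default (Fin 0 → M) Pi.instInhabited) =
    (@default (Fin 0 → ℚ × ℚ) Unique.instInhabited) from Subsingleton.elim _ _] at h2

end DpMin
end

section
/- Let G be a divisible linearly ordered abelian group (so G carries a scalar multiplication by ℚ) and let P ⊆ G satisfy: 0 ∈ P; for all x, x ∈ P iff −x ∈ P; P and G∖P are open in the order topology; if x ≤ y, the closed interval [x,y] is contained in P, and q,r ∈ ℚ are strictly positive, then qx + ry lies in the same convex component of P as x and y; and the analogous statement with G∖P in place of P. For a ∈ G, let C(a) be the convex component of P containing a if a ∈ P, and of G∖P if a ∉ P; let [a] = C(a) ∪ (−C(a)); let |a| = max(a,−a); and let [a]_≤ = ⋃{[b] : b ∈ G, |b| ≤ |a|}. Then: (1) if b ∉ [a] and |a|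 < |b|, then a + b ∈ [b]; (2) if b ∈ [a], then a + b ∈ [a]_≤; (3) [a]_≤ is closed under ℚ-linear combinations: every finite sum q₁x₁ + … + qₙxₙ with qᵢ ∈ ℚ and xᵢ ∈ [a]_≤ lies in [a]_≤. -/
set_option linter.unusedSectionVars false


namespace DpMin

variable {G : Type*}

/-- The convex component of a point `a` in a set `S`: the union of all convex (order-connected)
subsets of `S` containing `a`. -/
def convComp [LinearOrder G] (S : Set G) (a : G) : Set G :=
  ⋃₀ {C : Set G | C ⊆ S ∧ a ∈ C ∧ C.OrdConnected}

open scoped Classical in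
/-- `comp P a` is the convex component of `P` containing `a` if `a ∈ P`, and the convex
component of `G ∖ P` containing `a` otherwise. -/
noncomputable def comp [LinearOrder G] (P : Set G) (a : G) : Set G :=
  if a ∈ P then convComp P a else convComp Pᶜ a

/-- The class `[a] = C(a) ∪ (−C(a))`. -/
def cls [AddCommGroup G] [LinearOrder G] [IsOrderedAddMonoid G] (P : Set G) (a : G) : Set G :=
  comp P a ∪ (Neg.neg '' comp P a)

/-- `[a]_≤ = ⋃ {[b] : |b| ≤ |a|}`. -/
def clsLE [AddCommGroup G] [LinearOrder G] [IsOrderedAddMonoid G] (P : Set G) (a : G) : Set G :=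
  ⋃ (b : G) (_ : |b| ≤ |a|), cls P b

/-! ### Auxiliary lemmas -/

section ConvComp

variable [LinearOrder G] {S : Set G} {a b : G}

lemma mem_convComp_self (h : a ∈ S) : a ∈ convComp S a :=
  ⟨{a}, ⟨by simpa using h, rfl, Set.ordConnected_singleton⟩, rfl⟩

lemma convComp_subset : convComp S a ⊆ S := by
  rintro x ⟨C, ⟨hCS, -, -⟩, hx⟩
  exact hCS hx

lemma ordConnected_convComp : (convComp S a).OrdConnected := by
  constructor
  rintro x ⟨C1, ⟨hC1S, haC1, hC1⟩, hxC1⟩ y ⟨C2, ⟨hC2S, haC2, hC2⟩, hyC2⟩ z hz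
  rcases le_total z a with hza | haz
  · exact ⟨C1, ⟨hC1S, haC1, hC1⟩, hC1.out hxC1 haC1 ⟨hz.1, hza⟩⟩
  · exact ⟨C2, ⟨hC2S, haC2, hC2⟩, hC2.out haC2 hyC2 ⟨haz, hz.2⟩⟩

lemma subset_convComp {C : Set G} (hCS : C ⊆ S) (haC : a ∈ C) (hC : C.OrdConnected) :
    C ⊆ convComp S a :=
  Set.subset_sUnion_of_mem ⟨hCS, haC, hC⟩

lemma convComp_eq_of_mem (h : b ∈ convComp S a) : convComp S b = convComp S a := by
  have haS : a ∈ S := by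
    obtain ⟨C, ⟨hCS, haC, -⟩, -⟩ := h
    exact hCS haC
  have h1 : convComp S a ⊆ convComp S b :=
    subset_convComp convComp_subset h ordConnected_convComp
  have h2 : convComp S b ⊆ convComp S a :=
    subset_convComp convComp_subset (h1 (mem_convComp_self haS)) ordConnected_convComp
  exact le_antisymm h2 h1

end ConvComp

section Comp

variable [LinearOrder G] {P : Set G} {a b : G}

lemma comp_self : a ∈ comp P a := by
  by_cases h : a ∈ P
  · simpa [comp, h] using mem_convComp_self h
  · simpa [comp, h] using mem_convComp_self (show a ∈ Pᶜ from h)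

lemma ordConnected_comp : (comp P a).OrdConnected := by
  by_cases h : a ∈ P <;> simp [comp, h] <;> exact ordConnected_convComp

lemma comp_eq_of_mem (h : b ∈ comp P a) : comp P b = comp P a := by
  by_cases ha : a ∈ P
  · have h' : b ∈ convComp P a := by simpa [comp, ha] using h
    have hbP : b ∈ P := convComp_subset h'
    simp only [comp, if_pos ha, if_pos hbP]
    exact convComp_eq_of_mem h'
  · have h' : b ∈ convComp Pᶜ a := by simpa [comp, ha] using h
    have hbP : b ∉ P := convComp_subset h'
    simp only [comp, if_neg ha, if_neg hbP]
    exact convComp_eq_of_mem h'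

end Comp

section NegSym

variable [AddCommGroup G] [LinearOrder G] [IsOrderedAddMonoid G] {P : Set G} {a b x z : G}

lemma neg_mem_convComp {S : Set G} (hS : ∀ u : G, u ∈ S ↔ -u ∈ S) {a x : G}
    (h : x ∈ convComp S a) : -x ∈ convComp S (-a) := by
  obtain ⟨C, ⟨hCS, haC, hC⟩, hxC⟩ := h
  refine ⟨Neg.neg '' C, ⟨?_, ⟨a, haC, rfl⟩, ?_⟩, ⟨x, hxC, rfl⟩⟩
  · rintro _ ⟨c, hc, rfl⟩
    exact (hS c).mp (hCS hc)
  · constructor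
    rintro _ ⟨u, hu, rfl⟩ _ ⟨v, hv, rfl⟩ z hz
    have h1 : v ≤ -z := by
      have := neg_le_neg hz.2
      rwa [neg_neg] at this
    have h2 : -z ≤ u := by
      have := neg_le_neg hz.1
      rwa [neg_neg] at this
    exact ⟨-z, hC.out hv hu ⟨h1, h2⟩, neg_neg z⟩

lemma neg_mem_comp (hsym : ∀ x : G, x ∈ P ↔ -x ∈ P) (h : x ∈ comp P a) : -x ∈ comp P (-a) := by
  by_cases ha : a ∈ P
  · have h' : x ∈ convComp P a := by simpa [comp, ha] using h
    have hna : -a ∈ P := (hsym a).mp ha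
    have := neg_mem_convComp hsym h'
    simpa [comp, hna] using this
  · have h' : x ∈ convComp Pᶜ a := by simpa [comp, ha] using h
    have hna : -a ∉ P := fun hmem => ha (by simpa using (hsym (-a)).mp hmem)
    have hS : ∀ u : G, u ∈ Pᶜ ↔ -u ∈ Pᶜ := fun u => not_congr (hsym u)
    have := neg_mem_convComp hS h'
    simpa [comp, hna] using this

lemma mem_comp_neg (hsym : ∀ x : G, x ∈ P ↔ -x ∈ P) : z ∈ comp P (-a) ↔ -z ∈ comp P a :=
  ⟨fun h => by simpa using neg_mem_comp hsym h,
   fun h => by simpa using neg_mem_comp hsym h⟩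

lemma mem_cls_iff : z ∈ cls P a ↔ z ∈ comp P a ∨ -z ∈ comp P a := by
  unfold cls
  rw [Set.mem_union]
  apply or_congr Iff.rfl
  constructor
  · rintro ⟨c, hc, rfl⟩
    rwa [neg_neg]
  · intro h
    exact ⟨-z, h, neg_neg z⟩

lemma mem_cls_self : a ∈ cls P a := mem_cls_iff.mpr (Or.inl comp_self)

lemma neg_mem_cls (h : z ∈ cls P a) : -z ∈ cls P a := by
  rcases mem_cls_iff.mp h with h | h
  · exact mem_cls_iff.mpr (Or.inr (by rwa [neg_neg]))
  · exact mem_cls_iff.mpr (Or.inl h)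

lemma cls_neg (hsym : ∀ x : G, x ∈ P ↔ -x ∈ P) : cls P (-a) = cls P a := by
  ext z
  rw [mem_cls_iff, mem_cls_iff, mem_comp_neg hsym, mem_comp_neg hsym, neg_neg]
  exact or_comm

lemma cls_eq_of_mem (hsym : ∀ x : G, x ∈ P ↔ -x ∈ P) (h : b ∈ cls P a) : cls P b = cls P a := by
  rcases mem_cls_iff.mp h with hb | hb
  · unfold cls
    rw [comp_eq_of_mem hb]
  · have hb' : cls P (-b) = cls P a := by
      unfold cls
      rw [comp_eq_of_mem hb]
    rw [← hb', cls_neg hsym]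

lemma mem_clsLE_iff {a z : G} : z ∈ clsLE P a ↔ ∃ b, |b| ≤ |a| ∧ z ∈ cls P b := by
  simp [clsLE]

end NegSym

section QSmul

variable [AddCommGroup G] [LinearOrder G] [IsOrderedAddMonoid G] [Module ℚ G]

lemma key_qsmul (q : ℚ) (x : G) : q.den • (q • x) = q.num • x := by
  rw [← Nat.cast_smul_eq_nsmul ℚ, ← Int.cast_smul_eq_zsmul ℚ, smul_smul]
  congr 1
  rw [mul_comm]
  exact_mod_cast Rat.mul_den_eq_num q

lemma qsmul_pos {q : ℚ} {x : G} (hq : 0 < q) (hx : 0 < x) : 0 < q • x := by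
  by_contra h
  push_neg at h
  have h1 : q.den • (q • x) ≤ 0 := nsmul_nonpos h q.den
  rw [key_qsmul] at h1
  exact absurd h1 (not_le.mpr (zsmul_pos hx (Rat.num_pos.mpr hq)))

lemma qsmul_nonneg {q : ℚ} {x : G} (hq : 0 ≤ q) (hx : 0 ≤ x) : 0 ≤ q • x := by
  rcases hq.eq_or_lt with rfl | hq
  · simp
  rcases hx.eq_or_lt with rfl | hx
  · simp
  exact (qsmul_pos hq hx).le

lemma qsmul_le_qsmul {q : ℚ} (hq : 0 ≤ q) {x y : G} (h : x ≤ y) : q • x ≤ q • y := by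
  have := qsmul_nonneg hq (sub_nonneg.mpr h)
  rw [smul_sub] at this
  exact sub_nonneg.mp this

lemma abs_qsmul {q : ℚ} (hq : 0 ≤ q) (x : G) : |q • x| = q • |x| := by
  rcases le_total 0 x with hx | hx
  · rw [abs_of_nonneg hx, abs_of_nonneg (qsmul_nonneg hq hx)]
  · have h1 : q • x ≤ 0 := by
      have := qsmul_le_qsmul hq hx
      rwa [smul_zero] at this
    rw [abs_of_nonpos hx, abs_of_nonpos h1, smul_neg]

end QSmul

section Main

variable [AddCommGroup G] [LinearOrder G] [IsOrderedAddMonoid G] [Module ℚ G] {P : Set G} {a b x y z c e : G}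

lemma add_smul_mem_comp (h5 : ∀ x y : G, x ≤ y → Set.Icc x y ⊆ P → ∀ q r : ℚ, 0 < q → 0 < r →
      q • x + r • y ∈ convComp P x ∧ q • x + r • y ∈ convComp P y)
    (h5' : ∀ x y : G, x ≤ y → Set.Icc x y ⊆ Pᶜ → ∀ q r : ℚ, 0 < q → 0 < r →
      q • x + r • y ∈ convComp Pᶜ x ∧ q • x + r • y ∈ convComp Pᶜ y) (hy : y ∈ comp P x) {q r : ℚ} (hq : 0 < q) (hr : 0 < r) :
    q • x + r • y ∈ comp P x := by
  by_cases hx : x ∈ P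
  · have hy' : y ∈ convComp P x := by simpa [comp, hx] using hy
    have hsub : ∀ u v : G, u ∈ convComp P x → v ∈ convComp P x → Set.Icc u v ⊆ P :=
      fun u v hu hv => (ordConnected_convComp.out hu hv).trans convComp_subset
    rcases le_total x y with hxy | hyx
    · have := (h5 x y hxy (hsub x y (mem_convComp_self hx) hy') q r hq hr).1
      simpa [comp, hx] using this
    · have h' := (h5 y x hyx (hsub y x hy' (mem_convComp_self hx)) r q hr hq).2
      rw [add_comm] at h'
      simpa [comp, hx] using h'
  · have hy' : y ∈ convComp Pᶜ x := by simpa [comp, hx] using hy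
    have hsub : ∀ u v : G, u ∈ convComp Pᶜ x → v ∈ convComp Pᶜ x → Set.Icc u v ⊆ Pᶜ :=
      fun u v hu hv => (ordConnected_convComp.out hu hv).trans convComp_subset
    rcases le_total x y with hxy | hyx
    · have := (h5' x y hxy (hsub x y (mem_convComp_self hx) hy') q r hq hr).1
      simpa [comp, hx] using this
    · have h' := (h5' y x hyx (hsub y x hy' (mem_convComp_self hx)) r q hr hq).2
      rw [add_comm] at h'
      simpa [comp, hx] using h'

lemma smul_mem_comp (h5 : ∀ x y : G, x ≤ y → Set.Icc x y ⊆ P → ∀ q r : ℚ, 0 < q → 0 < r →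
      q • x + r • y ∈ convComp P x ∧ q • x + r • y ∈ convComp P y)
    (h5' : ∀ x y : G, x ≤ y → Set.Icc x y ⊆ Pᶜ → ∀ q r : ℚ, 0 < q → 0 < r →
      q • x + r • y ∈ convComp Pᶜ x ∧ q • x + r • y ∈ convComp Pᶜ y) {q : ℚ} (hq : 0 < q) (x : G) : q • x ∈ comp P x := by
  have h := add_smul_mem_comp h5 h5' (comp_self (P := P) (a := x)) (half_pos hq) (half_pos hq)
  rwa [← add_smul, add_halves] at h

lemma add_mem_comp (h5 : ∀ x y : G, x ≤ y → Set.Icc x y ⊆ P → ∀ q r : ℚ, 0 < q → 0 < r →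
      q • x + r • y ∈ convComp P x ∧ q • x + r • y ∈ convComp P y)
    (h5' : ∀ x y : G, x ≤ y → Set.Icc x y ⊆ Pᶜ → ∀ q r : ℚ, 0 < q → 0 < r →
      q • x + r • y ∈ convComp Pᶜ x ∧ q • x + r • y ∈ convComp Pᶜ y) (hy : y ∈ comp P x) : x + y ∈ comp P x := by
  have h := add_smul_mem_comp h5 h5' hy one_pos one_pos
  simpa using h

lemma sub_mem_comp_of_zero (hsym : ∀ x : G, x ∈ P ↔ -x ∈ P) (h5 : ∀ x y : G, x ≤ y → Set.Icc x y ⊆ P → ∀ q r : ℚ, 0 < q → 0 < r →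
      q • x + r • y ∈ convComp P x ∧ q • x + r • y ∈ convComp P y)
    (h5' : ∀ x y : G, x ≤ y → Set.Icc x y ⊆ Pᶜ → ∀ q r : ℚ, 0 < q → 0 < r →
      q • x + r • y ∈ convComp Pᶜ x ∧ q • x + r • y ∈ convComp Pᶜ y) (h0 : (0 : G) ∈ comp P x) (hc : c ∈ comp P x) :
    x - c ∈ comp P x := by
  have e1 : comp P (0 : G) = comp P x := comp_eq_of_mem h0
  have hneg : -c ∈ comp P x := by
    rw [← e1]
    rw [← e1] at hc
    have := mem_comp_neg (P := P) hsym (a := (0 : G)) (z := -c)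
    rw [neg_zero, neg_neg] at this
    exact this.mpr hc
  have := add_mem_comp h5 h5' hneg
  rwa [← sub_eq_add_neg] at this

lemma smul_mem_cls (h5 : ∀ x y : G, x ≤ y → Set.Icc x y ⊆ P → ∀ q r : ℚ, 0 < q → 0 < r →
      q • x + r • y ∈ convComp P x ∧ q • x + r • y ∈ convComp P y)
    (h5' : ∀ x y : G, x ≤ y → Set.Icc x y ⊆ Pᶜ → ∀ q r : ℚ, 0 < q → 0 < r →
      q • x + r • y ∈ convComp Pᶜ x ∧ q • x + r • y ∈ convComp Pᶜ y) {q : ℚ} (hq : q ≠ 0) (x : G) : q • x ∈ cls P x := by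
  rcases hq.lt_or_gt with h | h
  · refine mem_cls_iff.mpr (Or.inr ?_)
    rw [← neg_smul]
    exact smul_mem_comp h5 h5' (neg_pos.mpr h) x
  · exact mem_cls_iff.mpr (Or.inl (smul_mem_comp h5 h5' h x))

lemma cls_smul_eq (hsym : ∀ x : G, x ∈ P ↔ -x ∈ P) (h5 : ∀ x y : G, x ≤ y → Set.Icc x y ⊆ P → ∀ q r : ℚ, 0 < q → 0 < r →
      q • x + r • y ∈ convComp P x ∧ q • x + r • y ∈ convComp P y)
    (h5' : ∀ x y : G, x ≤ y → Set.Icc x y ⊆ Pᶜ → ∀ q r : ℚ, 0 < q → 0 < r →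
      q • x + r • y ∈ convComp Pᶜ x ∧ q • x + r • y ∈ convComp Pᶜ y) {q : ℚ} (hq : q ≠ 0) (x : G) : cls P (q • x) = cls P x :=
  cls_eq_of_mem hsym (smul_mem_cls h5 h5' hq x)

lemma small_mem_clsLE (hsym : ∀ x : G, x ∈ P ↔ -x ∈ P) (h5 : ∀ x y : G, x ≤ y → Set.Icc x y ⊆ P → ∀ q r : ℚ, 0 < q → 0 < r →
      q • x + r • y ∈ convComp P x ∧ q • x + r • y ∈ convComp P y)
    (h5' : ∀ x y : G, x ≤ y → Set.Icc x y ⊆ Pᶜ → ∀ q r : ℚ, 0 < q → 0 < r →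
      q • x + r • y ∈ convComp Pᶜ x ∧ q • x + r • y ∈ convComp Pᶜ y) (h : |z| ≤ (2 : ℚ) • |a|) : z ∈ clsLE P a := by
  refine mem_clsLE_iff.mpr ⟨(2 : ℚ)⁻¹ • z, ?_, ?_⟩
  · rw [abs_qsmul (by norm_num) z]
    calc (2 : ℚ)⁻¹ • |z| ≤ (2 : ℚ)⁻¹ • ((2 : ℚ) • |a|) := qsmul_le_qsmul (by norm_num) h
      _ = |a| := by rw [smul_smul]; norm_num
  · rw [cls_smul_eq hsym h5 h5' (by norm_num) z]
    exact mem_cls_self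

lemma claim1pos (hsym : ∀ x : G, x ∈ P ↔ -x ∈ P) (h5 : ∀ x y : G, x ≤ y → Set.Icc x y ⊆ P → ∀ q r : ℚ, 0 < q → 0 < r →
      q • x + r • y ∈ convComp P x ∧ q • x + r • y ∈ convComp P y)
    (h5' : ∀ x y : G, x ≤ y → Set.Icc x y ⊆ Pᶜ → ∀ q r : ℚ, 0 < q → 0 < r →
      q • x + r • y ∈ convComp Pᶜ x ∧ q • x + r • y ∈ convComp Pᶜ y) (hb0 : 0 < b) (hnb : b ∉ cls P a) (hab : |a| < |b|) :
    a + b ∈ cls P b := by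
  have habs : |b| = b := abs_of_pos hb0
  have hab' : a ≤ b := (le_abs_self a).trans (habs ▸ hab).le
  rcases le_or_gt ((2 : ℚ)⁻¹ • b) (a + b) with h | h
  · have hlow : (2 : ℚ)⁻¹ • b ∈ comp P b := smul_mem_comp h5 h5' (by norm_num) b
    have hhigh : (2 : ℚ) • b ∈ comp P b := smul_mem_comp h5 h5' (by norm_num) b
    have hup : a + b ≤ (2 : ℚ) • b := by
      rw [two_smul]
      exact add_le_add_left hab' b
    exact mem_cls_iff.mpr (Or.inl (ordConnected_comp.out hlow hhigh ⟨h, hup⟩))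
  · exfalso
    apply hnb
    have hbb : (2 : ℚ)⁻¹ • b + (2 : ℚ)⁻¹ • b = b := by
      rw [← add_smul]; norm_num
    have h1 : (2 : ℚ)⁻¹ • b ≤ -a := by
      have h2 := add_lt_add_left h (-b)
      rw [add_neg_cancel_right] at h2
      have e : (2 : ℚ)⁻¹ • b + -b = -((2 : ℚ)⁻¹ • b) := by
        have key : ∀ u : G, u + u = b → u + -b = -u := fun u hu => by rw [← hu]; abel
        exact key _ hbb
      rw [e] at h2
      have := neg_le_neg h2.le
      rwa [neg_neg] at this
    have h2 : -a ≤ b := (neg_le_abs a).trans (habs ▸ hab).le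
    have hmem : -a ∈ comp P b :=
      ordConnected_comp.out (smul_mem_comp h5 h5' (by norm_num) b) comp_self ⟨h1, h2⟩
    have hbmem : b ∈ comp P (-a) := by
      rw [comp_eq_of_mem hmem]
      exact comp_self
    have : b ∈ cls P (-a) := mem_cls_iff.mpr (Or.inl hbmem)
    rwa [cls_neg hsym] at this

lemma claim1 (hsym : ∀ x : G, x ∈ P ↔ -x ∈ P) (h5 : ∀ x y : G, x ≤ y → Set.Icc x y ⊆ P → ∀ q r : ℚ, 0 < q → 0 < r →
      q • x + r • y ∈ convComp P x ∧ q • x + r • y ∈ convComp P y)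
    (h5' : ∀ x y : G, x ≤ y → Set.Icc x y ⊆ Pᶜ → ∀ q r : ℚ, 0 < q → 0 < r →
      q • x + r • y ∈ convComp Pᶜ x ∧ q • x + r • y ∈ convComp Pᶜ y) (hnb : b ∉ cls P a) (hab : |a| < |b|) : a + b ∈ cls P b := by
  rcases lt_trichotomy 0 b with hb0 | rfl | hb0
  · exact claim1pos hsym h5 h5' hb0 hnb hab
  · exact absurd hab (by simpa using (abs_nonneg a).not_gt)
  · have hnb' : -b ∉ cls P (-a) := by
      rw [cls_neg hsym]
      intro hmem
      exact hnb (by simpa using neg_mem_cls hmem)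
    have h := claim1pos hsym h5 h5' (neg_pos.mpr hb0) hnb' (by simpa [abs_neg] using hab)
    rw [cls_neg hsym] at h
    have h2 := neg_mem_cls h
    have e : -(-a + -b) = a + b := by abel
    rwa [e] at h2

lemma lemD2 (hsym : ∀ x : G, x ∈ P ↔ -x ∈ P) (h5 : ∀ x y : G, x ≤ y → Set.Icc x y ⊆ P → ∀ q r : ℚ, 0 < q → 0 < r →
      q • x + r • y ∈ convComp P x ∧ q • x + r • y ∈ convComp P y)
    (h5' : ∀ x y : G, x ≤ y → Set.Icc x y ⊆ Pᶜ → ∀ q r : ℚ, 0 < q → 0 < r →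
      q • x + r • y ∈ convComp Pᶜ x ∧ q • x + r • y ∈ convComp Pᶜ y) (he : e ∈ comp P x) (hc : c ∈ comp P x) (hep : 0 < e)
    (hbig : e < x - c ∨ e < c - x) : x - c ∈ cls P x := by
  by_cases h0 : (0 : G) ∈ comp P x
  · exact mem_cls_iff.mpr (Or.inl (sub_mem_comp_of_zero hsym h5 h5' h0 hc))
  · have hcpos : 0 < c := by
      by_contra hcle
      push_neg at hcle
      exact h0 (ordConnected_comp.out hc he ⟨hcle, hep.le⟩)
    have hxpos : 0 < x := by
      by_contra hxle
      push_neg at hxle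
      exact h0 (ordConnected_comp.out comp_self he ⟨hxle, hep.le⟩)
    rcases hbig with h | h
    · exact mem_cls_iff.mpr (Or.inl (ordConnected_comp.out he comp_self
        ⟨h.le, sub_le_self x hcpos.le⟩))
    · have hmem : c - x ∈ comp P x :=
        ordConnected_comp.out he hc ⟨h.le, sub_le_self c hxpos.le⟩
      refine mem_cls_iff.mpr (Or.inr ?_)
      rwa [neg_sub]

lemma add_mem_clsLE (hsym : ∀ x : G, x ∈ P ↔ -x ∈ P) (h5 : ∀ x y : G, x ≤ y → Set.Icc x y ⊆ P → ∀ q r : ℚ, 0 < q → 0 < r →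
      q • x + r • y ∈ convComp P x ∧ q • x + r • y ∈ convComp P y)
    (h5' : ∀ x y : G, x ≤ y → Set.Icc x y ⊆ Pᶜ → ∀ q r : ℚ, 0 < q → 0 < r →
      q • x + r • y ∈ convComp Pᶜ x ∧ q • x + r • y ∈ convComp Pᶜ y) {b1 b2 : G} (hx : x ∈ cls P b1) (hy : y ∈ cls P b2)
    (hb1 : |b1| ≤ |a|) (hb2 : |b2| ≤ |a|) : x + y ∈ clsLE P a := by
  by_cases hsmall : |x + y| ≤ (2 : ℚ) • |a|
  · exact small_mem_clsLE hsym h5 h5' hsmall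
  push_neg at hsmall
  by_cases hyx : y ∈ cls P x
  · rcases mem_cls_iff.mp hyx with hy1 | hy2
    · have hgoal : x + y ∈ cls P x := mem_cls_iff.mpr (Or.inl (add_mem_comp h5 h5' hy1))
      rw [cls_eq_of_mem hsym hx] at hgoal
      exact mem_clsLE_iff.mpr ⟨b1, hb1, hgoal⟩
    · -- -y ∈ comp P x
      have hb1x : b1 ∈ cls P x := by
        rw [cls_eq_of_mem hsym hx]
        exact mem_cls_self
      obtain ⟨e0, he0c, he0abs⟩ : ∃ e0, e0 ∈ comp P x ∧ |e0| = |b1| := by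
        rcases mem_cls_iff.mp hb1x with h | h
        exacts [⟨b1, h, rfl⟩, ⟨-b1, h, abs_neg b1⟩]
      have habs2 : |a| ≤ (2 : ℚ) • |a| := by
        rw [two_smul]
        exact le_add_of_nonneg_left (abs_nonneg a)
      have he0le : |e0| ≤ (2 : ℚ) • |a| := by
        rw [he0abs]
        exact hb1.trans habs2
      have hgoal : x + y ∈ cls P x := by
        rcases lt_trichotomy e0 0 with hneg | hzero | hpos
        · -- mirror case
          have he' : -e0 ∈ comp P (-x) := (mem_comp_neg hsym).mpr (by rwa [neg_neg])
          have hc' : y ∈ comp P (-x) := (mem_comp_neg hsym).mpr hy2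
          have hkey : -e0 ≤ (2 : ℚ) • |a| := (neg_le_abs e0).trans he0le
          have h1 : -x - y ∈ cls P (-x) := by
            refine lemD2 hsym h5 h5' he' hc' (neg_pos.mpr hneg) ?_
            rcases lt_abs.mp hsmall with h | h
            · right
              have e2 : y - -x = x + y := by abel
              rw [e2]
              exact lt_of_le_of_lt hkey h
            · left
              have e2 : -x - y = -(x + y) := by abel
              rw [e2]
              exact lt_of_le_of_lt hkey h
          rw [cls_neg hsym] at h1
          have e2 : -x - y = -(x + y) := by abel
          rw [e2] at h1
          have h2 := neg_mem_cls h1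
          rwa [neg_neg] at h2
        · have h0 : (0 : G) ∈ comp P x := hzero ▸ he0c
          have h1 := sub_mem_comp_of_zero hsym h5 h5' h0 hy2
          rw [sub_neg_eq_add] at h1
          exact mem_cls_iff.mpr (Or.inl h1)
        · have hkey : e0 ≤ (2 : ℚ) • |a| := (le_abs_self e0).trans he0le
          have h1 : x - -y ∈ cls P x := by
            refine lemD2 hsym h5 h5' he0c hy2 hpos ?_
            rcases lt_abs.mp hsmall with h | h
            · left
              rw [sub_neg_eq_add]
              exact lt_of_le_of_lt hkey h
            · right
              have e2 : -y - x = -(x + y) := by abel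
              rw [e2]
              exact lt_of_le_of_lt hkey h
          rwa [sub_neg_eq_add] at h1
      rw [cls_eq_of_mem hsym hx] at hgoal
      exact mem_clsLE_iff.mpr ⟨b1, hb1, hgoal⟩
  · rcases lt_trichotomy |x| |y| with h | h | h
    · have hgoal := claim1 hsym h5 h5' hyx h
      rw [cls_eq_of_mem hsym hy] at hgoal
      exact mem_clsLE_iff.mpr ⟨b2, hb2, hgoal⟩
    · rcases abs_eq_abs.mp h with heq | heq
      · subst heq
        exact absurd mem_cls_self hyx
      · exfalso
        have hzero : x + y = 0 := by rw [heq]; abel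
        rw [hzero] at hsmall
        simp only [abs_zero] at hsmall
        exact absurd hsmall (not_lt.mpr (qsmul_nonneg (by norm_num) (abs_nonneg a)))
    · have hxy : x ∉ cls P y := by
        intro hmem
        apply hyx
        rw [cls_eq_of_mem hsym hmem]
        exact mem_cls_self
      have hgoal := claim1 hsym h5 h5' hxy h
      rw [add_comm] at hgoal
      rw [cls_eq_of_mem hsym hx] at hgoal
      exact mem_clsLE_iff.mpr ⟨b1, hb1, hgoal⟩

lemma zero_mem_clsLE : (0 : G) ∈ clsLE P a :=
  mem_clsLE_iff.mpr ⟨0, by simpa using abs_nonneg a, mem_cls_self⟩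

lemma smul_mem_clsLE (hsym : ∀ x : G, x ∈ P ↔ -x ∈ P) (h5 : ∀ x y : G, x ≤ y → Set.Icc x y ⊆ P → ∀ q r : ℚ, 0 < q → 0 < r →
      q • x + r • y ∈ convComp P x ∧ q • x + r • y ∈ convComp P y)
    (h5' : ∀ x y : G, x ≤ y → Set.Icc x y ⊆ Pᶜ → ∀ q r : ℚ, 0 < q → 0 < r →
      q • x + r • y ∈ convComp Pᶜ x ∧ q • x + r • y ∈ convComp Pᶜ y) (q : ℚ) (h : z ∈ clsLE P a) : q • z ∈ clsLE P a := by
  rcases eq_or_ne q 0 with rfl | hq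
  · simpa using zero_mem_clsLE (P := P) (a := a)
  obtain ⟨b, hb, hz⟩ := mem_clsLE_iff.mp h
  refine mem_clsLE_iff.mpr ⟨b, hb, ?_⟩
  rw [← cls_eq_of_mem hsym hz, ← cls_smul_eq hsym h5 h5' hq z]
  exact mem_cls_self

end Main

/-- Lemma on the classes `[a]` in a divisible ordered abelian group with a predicate `P`
satisfying the axioms (2)–(5'): (1) if `b ∉ [a]` and `|a| < |b|` then `a + b ∈ [b]`;
(2) if `b ∈ [a]` then `a + b ∈ [a]_≤`; (3) `[a]_≤` is closed under ℚ-linear combinations. -/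
theorem cls_lemma [AddCommGroup G] [LinearOrder G] [IsOrderedAddMonoid G] [Module ℚ G]
    [TopologicalSpace G] [OrderTopology G]
    (P : Set G)
    (h0 : (0 : G) ∈ P)
    (hsym : ∀ x : G, x ∈ P ↔ -x ∈ P)
    (hopenP : IsOpen P) (hopenPc : IsOpen Pᶜ)
    (h5 : ∀ x y : G, x ≤ y → Set.Icc x y ⊆ P → ∀ q r : ℚ, 0 < q → 0 < r →
      q • x + r • y ∈ convComp P x ∧ q • x + r • y ∈ convComp P y)
    (h5' : ∀ x y : G, x ≤ y → Set.Icc x y ⊆ Pᶜ → ∀ q r : ℚ, 0 < q → 0 < r →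
      q • x + r • y ∈ convComp Pᶜ x ∧ q • x + r • y ∈ convComp Pᶜ y) :
    (∀ a b : G, b ∉ cls P a → |a| < |b| → a + b ∈ cls P b) ∧
    (∀ a b : G, b ∈ cls P a → a + b ∈ clsLE P a) ∧
    (∀ (a : G) (n : ℕ) (q : Fin n → ℚ) (x : Fin n → G),
      (∀ i, x i ∈ clsLE P a) → (∑ i, q i • x i) ∈ clsLE P a) := by
  refine ⟨fun a b hnb hab => claim1 hsym h5 h5' hnb hab, ?_, ?_⟩
  · intro a b hb
    exact add_mem_clsLE hsym h5 h5' mem_cls_self hb le_rfl le_rfl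
  · intro a n q x hx
    have hadd : ∀ u v : G, u ∈ clsLE P a → v ∈ clsLE P a → u + v ∈ clsLE P a := by
      intro u v hu hv
      obtain ⟨b1, hb1, hu'⟩ := mem_clsLE_iff.mp hu
      obtain ⟨b2, hb2, hv'⟩ := mem_clsLE_iff.mp hv
      exact add_mem_clsLE hsym h5 h5' hu' hv' hb1 hb2
    refine Finset.sum_induction _ (· ∈ clsLE P a) hadd zero_mem_clsLE ?_
    intro i _
    exact smul_mem_clsLE hsym h5 h5' (q i) (hx i)

end DpMin
end

section
/- Cells in ℚ_p are cell-like: for every integer n ≥ 1 there exists an integer k ≥ 1 such that for all λ, c, c', x, x' ∈ ℚ_p with x ≠ c and x' ≠ c', for all γ ∈ ℤ ∪ {+∞} and δ ∈ ℤ ∪ {−∞}, if (i) γ ≥ v(x − c) ≥ δ, (ii) x − c ∈ λ·Pₙ, and (iii) x − c = x' − c' or v((x − c) − (x' − c')) ≥ v(x − c) + k, then γ ≥ v(x' − c') ≥ δ and x' − c' ∈ λ·Pₙ. Here v : ℚ_p^× → ℤ is the p-adic valuation and Pₙ = {wⁿ : w ∈ ℚ_p} is the set of n-th powers in ℚ_p.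 -/
namespace DpMin

open Polynomial

/-- Elements of `ℚ_p` sufficiently close to `1` are `n`-th powers. -/
lemma pow_of_close (p : ℕ) [Fact p.Prime] (n : ℕ) (hn : 1 ≤ n) :
    ∃ k : ℕ, 1 ≤ k ∧ ∀ t : ℚ_[p], ‖t - 1‖ ≤ (p : ℝ) ^ (-(k : ℤ)) → ∃ s : ℚ_[p], t = s ^ n := by
  have hp1 : (1 : ℝ) < p := by exact_mod_cast (Fact.out : p.Prime).one_lt
  have hp0 : (0 : ℝ) < p := lt_trans one_pos hp1
  set v : ℕ := padicValNat p n
  refine ⟨2 * v + 1, le_add_self, fun t ht => ?_⟩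
  have hnorm_n : ‖(n : ℚ_[p])‖ = (p : ℝ) ^ (-(v : ℤ)) := by
    rw [Padic.norm_eq_zpow_neg_valuation (by exact_mod_cast (by omega : n ≠ 0) : (n : ℚ_[p]) ≠ 0),
      Padic.valuation_natCast]
  -- t is a p-adic integer
  have ht1 : ‖t - 1‖ < 1 := lt_of_le_of_lt ht (zpow_lt_one_of_neg₀ hp1 (by omega))
  have htZ : ‖t‖ ≤ 1 := by
    have h := Padic.nonarchimedean (t - 1) 1
    have he : t - 1 + 1 = t := by ring
    rw [he, norm_one] at h
    exact h.trans (max_le ht1.le le_rfl)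
  set T : ℤ_[p] := ⟨t, htZ⟩ with hT
  set F : Polynomial ℤ_[p] := X ^ n - C T with hF
  have hevF : ∀ z : ℤ_[p], F.eval z = z ^ n - T := by intro z; simp [hF]
  have hderiv : F.derivative.eval 1 = (n : ℤ_[p]) := by
    simp [hF, Polynomial.derivative_sub, Polynomial.derivative_X_pow]
  have hkey : ‖F.eval 1‖ < ‖F.derivative.eval 1‖ ^ 2 := by
    rw [hderiv, hevF, one_pow]
    have h1 : ‖(1 : ℤ_[p]) - T‖ = ‖t - 1‖ := by
      rw [PadicInt.norm_def]
      push_cast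
      rw [← norm_neg]
      ring_nf
      rfl
    have h2 : ‖(n : ℤ_[p])‖ = (p : ℝ) ^ (-(v : ℤ)) := by
      rw [PadicInt.norm_def]; push_cast; exact hnorm_n
    rw [h1, h2, ← zpow_natCast, ← zpow_mul]
    refine lt_of_le_of_lt ht ?_
    apply zpow_lt_zpow_right₀ hp1
    push_cast; omega
  obtain ⟨z, hz, -⟩ := hensels_lemma hkey
  rw [Polynomial.coe_aeval_eq_eval, hevF, sub_eq_zero] at hz
  refine ⟨(z : ℚ_[p]), ?_⟩
  have : ((z ^ n : ℤ_[p]) : ℚ_[p]) = ((T : ℤ_[p]) : ℚ_[p]) := by rw [hz]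
  push_cast at this
  exact this.symm

/-- Cells in `ℚ_p` are cell-like: for every `n ≥ 1` there is `k ≥ 1` such that membership in the
cell `Cell_{n,λ}(c,γ,δ)` (an annulus condition `γ ≥ v(x−c) ≥ δ` together with a power-coset
condition `x − c ∈ λ·Pₙ`) depends only on the image of `x − c` in `ℚ_p^×/(1 + 𝔪^k)`. -/
theorem cells_are_cellLike (p : ℕ) [Fact p.Prime] (n : ℕ) (hn : 1 ≤ n) :
    ∃ k : ℕ, 1 ≤ k ∧
      ∀ (lam c c' x x' : ℚ_[p]), x ≠ c → x' ≠ c' →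
        ∀ (γ : WithTop ℤ) (δ : WithBot ℤ),
          ((Padic.valuation (x - c) : WithTop ℤ) ≤ γ) →
          ((δ : WithBot ℤ) ≤ (Padic.valuation (x - c) : WithBot ℤ)) →
          (∃ w : ℚ_[p], x - c = lam * w ^ n) →
          (x - c = x' - c' ∨
            Padic.valuation (x - c) + (k : ℤ) ≤ Padic.valuation ((x - c) - (x' - c'))) →
          ((Padic.valuation (x' - c') : WithTop ℤ) ≤ γ ∧
            (δ : WithBot ℤ) ≤ (Padic.valuation (x' - c') : WithBot ℤ) ∧
            ∃ w : ℚ_[p], x' - c' = lam * w ^ n) := by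
  have hp1 : (1 : ℝ) < p := by exact_mod_cast (Fact.out : p.Prime).one_lt
  obtain ⟨k, hk1, hkpow⟩ := pow_of_close p n hn
  refine ⟨k, hk1, ?_⟩
  intro lam c c' x x' hx hx' γ δ hγ hδ ⟨w, hw⟩ hclose
  set u := x - c with hu
  set u' := x' - c' with hu'
  have hu0 : u ≠ 0 := sub_ne_zero.mpr hx
  have hu'0 : u' ≠ 0 := sub_ne_zero.mpr hx'
  rcases hclose with heq | hval
  · rw [← heq]; exact ⟨hγ, hδ, w, hw⟩
  by_cases heq : u = u'
  · rw [← heq]; exact ⟨hγ, hδ, w, hw⟩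
  have hd0 : u - u' ≠ 0 := sub_ne_zero.mpr heq
  -- norm inequality
  have hnormd : ‖u - u'‖ ≤ ‖u‖ * (p : ℝ) ^ (-(k : ℤ)) := by
    rw [Padic.norm_eq_zpow_neg_valuation hd0, Padic.norm_eq_zpow_neg_valuation hu0, ← zpow_add₀ (by positivity)]
    apply zpow_le_zpow_right₀ hp1.le
    omega
  have hklt : (p : ℝ) ^ (-(k : ℤ)) < 1 := by
    exact zpow_lt_one_of_neg₀ hp1 (by omega)
  have hupos : 0 < ‖u‖ := norm_pos_iff.mpr hu0
  have hdlt : ‖u - u'‖ < ‖u‖ :=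
    lt_of_le_of_lt hnormd (by nlinarith)
  -- same norm
  have hnormeq : ‖u'‖ = ‖u‖ := by
    have h1 : ‖u'‖ ≤ ‖u‖ := by
      have h := Padic.nonarchimedean u (u' - u)
      have he : u + (u' - u) = u' := by ring
      rw [he] at h
      refine h.trans (max_le le_rfl ?_)
      rw [norm_sub_rev]; exact hdlt.le
    have h2 : ‖u‖ ≤ ‖u'‖ := by
      have h3 : ‖u‖ ≤ max ‖u'‖ ‖u - u'‖ := by
        simpa using Padic.nonarchimedean u' (u - u')
      rcases max_cases ‖u'‖ ‖u - u'‖ with ⟨he, -⟩ | ⟨he, -⟩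
      · rwa [he] at h3
      · rw [he] at h3; exact absurd (lt_of_le_of_lt h3 hdlt) (lt_irrefl _)
    exact le_antisymm h1 h2
  -- same valuation
  have hvaleq : Padic.valuation u' = Padic.valuation u := by
    rw [Padic.norm_eq_zpow_neg_valuation hu'0, Padic.norm_eq_zpow_neg_valuation hu0] at hnormeq
    exact neg_injective ((zpow_right_strictMono₀ hp1).injective hnormeq)
  refine ⟨by rw [hvaleq]; exact hγ, by rw [hvaleq]; exact hδ, ?_⟩
  -- power coset
  set t : ℚ_[p] := u' / u with htdef
  have htnorm : ‖t - 1‖ ≤ (p : ℝ) ^ (-(k : ℤ)) := by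
    have : t - 1 = -((u - u') / u) := by
      rw [htdef, div_sub_one hu0, ← neg_div, neg_sub]
    rw [this, norm_neg, norm_div]
    rw [div_le_iff₀ hupos]
    calc ‖u - u'‖ ≤ ‖u‖ * (p : ℝ) ^ (-(k : ℤ)) := hnormd
      _ = (p : ℝ) ^ (-(k : ℤ)) * ‖u‖ := mul_comm _ _
  obtain ⟨s, hs⟩ := hkpow t htnorm
  refine ⟨w * s, ?_⟩
  have hut : u' = u * t := by rw [htdef, mul_div_assoc', mul_div_right_comm, div_self hu0, one_mul]
  rw [hut, hw, hs, mul_pow]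
  ring

end DpMin
end
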